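/- arXiv:1212.5534 — 3 statements merged into one kernel-verified Lean document; each statement's English description precedes it below -/
import Mathlib

section
/- For all integers n with 1 ≤ n ≤ N, all k with 1 ≤ k ≤ n, real t > 0, and real x, the convolution (φ_n ∗ Ψ_{n-k}^{n,t})(x) := ∫_{-∞}^{x} e^{μ_n(y-x)} Ψ_{n-k}^{n,t}(y) dy equals Ψ_{n-1-k}^{n-1,t}(x). -/
open Complex MeasureTheory Finset

/-- `linePsi μ μm n k t x` is
`Ψ_{n-k}^{n,t}(x) = ((-1)^{n-k}/(2πi)) ∫_{iℝ+μ_-} dz e^{t z²/2 - x z}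
  (z-μ_1)⋯(z-μ_n)/((z-μ_1)⋯(z-μ_k))`,
parametrizing the vertical line `Re z = μ_-` as `z = μ_- + i y`, `dz = i dy`. -/
noncomputable def linePsi (μ : ℕ → ℝ) (μm : ℝ) (n k : ℕ) (t x : ℝ) : ℂ :=
  ((-1 : ℂ) ^ ((n : ℤ) - (k : ℤ)) / (2 * (Real.pi : ℂ) * I)) *
    ∫ y : ℝ,
      I * Complex.exp ((t : ℂ) * ((μm : ℂ) + I * y) ^ 2 / 2 - (x : ℂ) * ((μm : ℂ) + I * y)) *
        ((∏ j ∈ Finset.Icc 1 n, (((μm : ℂ) + I * y) - (μ j : ℂ))) /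
          (∏ j ∈ Finset.Icc 1 k, (((μm : ℂ) + I * y) - (μ j : ℂ))))

section AuxLemmas

open Set Filter
open scoped Topology

lemma aux_integrableOn_exp_mul_Iic {a : ℝ} (ha : 0 < a) (x : ℝ) :
    IntegrableOn (fun y => Real.exp (a * y)) (Set.Iic x) := by
  refine integrableOn_Iic_of_intervalIntegral_norm_bounded (Real.exp (a * x) / a) x
    (fun i => ((Real.continuous_exp.comp (continuous_const.mul continuous_id)).integrableOn_Ioc))
    tendsto_id ?_
  filter_upwards [eventually_le_atBot x] with i (hi : i ≤ x)
  simp_rw [Real.norm_of_nonneg (Real.exp_pos _).le]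
  rw [intervalIntegral.integral_comp_mul_left (f := Real.exp) ha.ne', smul_eq_mul,
    integral_exp, div_eq_inv_mul]
  gcongr
  simp [(Real.exp_pos _).le]

lemma aux_integral_cexp_Iic {a : ℂ} (ha : 0 < a.re) (x : ℝ) :
    ∫ y in Set.Iic x, Complex.exp (a * y) = Complex.exp (a * x) / a := by
  have ha0 : a ≠ 0 := fun h => by simp [h] at ha
  have hd : ∀ y : ℝ, HasDerivAt (fun y : ℝ => Complex.exp (a * y) / a) (Complex.exp (a * y)) y := by
    intro y
    have h1 : HasDerivAt (fun y : ℝ => a * (y : ℂ)) a y := by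
      simpa using (Complex.ofRealCLM.hasDerivAt (x := y)).const_mul a
    have h2 := (Complex.hasDerivAt_exp (a * y)).comp y h1
    simpa [mul_div_assoc, mul_div_cancel_right₀ _ ha0] using h2.div_const a
  have hint : IntegrableOn (fun y : ℝ => Complex.exp (a * y)) (Set.Iic x) := by
    refine (aux_integrableOn_exp_mul_Iic ha x).mono'
      ((Complex.continuous_exp.comp
        (continuous_const.mul Complex.continuous_ofReal)).aestronglyMeasurable) ?_
    filter_upwards with y
    simp [Complex.norm_exp]
  have htend : Tendsto (fun y : ℝ => Complex.exp (a * y) / a) atBot (𝓝 0) := by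
    rw [tendsto_zero_iff_norm_tendsto_zero]
    have h4 : (fun y : ℝ => ‖Complex.exp (a * y) / a‖) = fun y => Real.exp (a.re * y) / ‖a‖ := by
      funext y; simp [Complex.norm_exp]
    rw [h4]
    have h3 : Tendsto (fun y : ℝ => a.re * y) atBot atBot :=
      Tendsto.const_mul_atBot ha tendsto_id
    simpa using (Real.tendsto_exp_atBot.comp h3).div_const ‖a‖
  have := integral_Iic_of_hasDerivAt_of_tendsto' (a := x) (fun y _ => hd y) hint htend
  rw [this, sub_zero]

lemma aux_abs_pow_gauss {b : ℝ} (hb : 0 < b) (j : ℕ) :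
    Integrable (fun s : ℝ => |s| ^ j * Real.exp (-b * s ^ 2)) := by
  have hIoi : IntegrableOn (fun s : ℝ => |s| ^ j * Real.exp (-b * s ^ 2)) (Ioi 0) := by
    refine (integrableOn_rpow_mul_exp_neg_mul_sq hb (s := (j : ℝ))
      (by exact lt_of_lt_of_le (by norm_num) (Nat.cast_nonneg j))).congr_fun ?_ measurableSet_Ioi
    intro s hs
    show s ^ (j:ℝ) * _ = |s| ^ j * _
    rw [abs_of_pos hs, Real.rpow_natCast]
  have hIic : IntegrableOn (fun s : ℝ => |s| ^ j * Real.exp (-b * s ^ 2)) (Iic 0) := by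
    rw [← Measure.map_neg_eq_self (volume : Measure ℝ)]
    have m : MeasurableEmbedding fun x : ℝ => -x := (Homeomorph.neg ℝ).measurableEmbedding
    rw [m.integrableOn_map_iff]
    simp_rw [Function.comp_def, abs_neg, neg_sq, neg_preimage, neg_Iic, neg_zero]
    exact Iff.mpr integrableOn_Ici_iff_integrableOn_Ioi hIoi
  rw [← integrableOn_univ, ← Set.Iic_union_Ioi (a := (0:ℝ)), integrableOn_union]
  exact ⟨hIic, hIoi⟩

lemma aux_poly_gauss {b : ℝ} (hb : 0 < b) (C : ℝ) (m : ℕ) :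
    Integrable (fun s : ℝ => (C + |s|) ^ m * Real.exp (-b * s ^ 2)) := by
  have h : ∀ s : ℝ, (C + |s|) ^ m * Real.exp (-b * s ^ 2)
      = ∑ i ∈ Finset.range (m + 1),
        (C ^ i * (m.choose i : ℝ)) * (|s| ^ (m - i) * Real.exp (-b * s ^ 2)) := by
    intro s
    rw [add_pow, Finset.sum_mul]
    refine Finset.sum_congr rfl fun i _ => by ring
  simp_rw [h]
  exact integrable_finset_sum _ fun i _ => ((aux_abs_pow_gauss hb (m - i)).const_mul _)

variable {N : ℕ} {μ : ℕ → ℝ} {μm : ℝ}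

lemma aux_factor_ne_zero (hμm : ∀ j ∈ Finset.Icc 1 N, μm < μ j) {j : ℕ}
    (hj : j ∈ Finset.Icc 1 N) (s : ℝ) : ((μm : ℂ) + I * s) - (μ j : ℂ) ≠ 0 := by
  intro h
  have h2 : μm - μ j = 0 := by simpa using congrArg Complex.re h
  have := hμm j hj
  linarith

lemma aux_prod_ne_zero (hμm : ∀ j ∈ Finset.Icc 1 N, μm < μ j) {n : ℕ} (hn : n ≤ N) (s : ℝ) :
    (∏ j ∈ Finset.Icc 1 n, (((μm : ℂ) + I * s) - (μ j : ℂ))) ≠ 0 := by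
  rw [Finset.prod_ne_zero_iff]
  intro j hj
  rw [Finset.mem_Icc] at hj
  exact aux_factor_ne_zero hμm (Finset.mem_Icc.2 ⟨hj.1, hj.2.trans hn⟩) s

lemma aux_prod_split {n k : ℕ} (hkn : k ≤ n) (f : ℕ → ℂ) :
    ∏ j ∈ Finset.Icc 1 n, f j = (∏ j ∈ Finset.Icc 1 k, f j) * ∏ j ∈ Finset.Ioc k n, f j := by
  rw [show (1:ℕ) = 0 + 1 from rfl, Finset.Icc_add_one_left_eq_Ioc, Finset.Icc_add_one_left_eq_Ioc]
  exact (Finset.prod_Ioc_consecutive f (Nat.zero_le k) hkn).symm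

lemma linePsi_eq (hμm : ∀ j ∈ Finset.Icc 1 N, μm < μ j) {n k : ℕ} (hkn : k ≤ n) (hnN : n ≤ N)
    (t x : ℝ) :
    linePsi μ μm n k t x = ((-1 : ℂ) ^ ((n : ℤ) - (k : ℤ)) / (2 * (Real.pi : ℂ) * I)) *
      ∫ s : ℝ,
        I * Complex.exp ((t : ℂ) * ((μm : ℂ) + I * s) ^ 2 / 2 - (x : ℂ) * ((μm : ℂ) + I * s)) *
          ∏ j ∈ Finset.Ioc k n, (((μm : ℂ) + I * s) - (μ j : ℂ)) := by
  unfold linePsi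
  congr 1
  refine integral_congr_ae (Filter.Eventually.of_forall fun s => ?_)
  dsimp only
  congr 1
  rw [aux_prod_split hkn, mul_div_cancel_left₀ _ (aux_prod_ne_zero hμm (hkn.trans hnN) s)]

lemma linePsi_pred_eq (hμm : ∀ j ∈ Finset.Icc 1 N, μm < μ j) {n k : ℕ}
    (hn1 : 1 ≤ n) (hkn : k ≤ n) (hnN : n ≤ N) (t x : ℝ) :
    linePsi μ μm (n - 1) k t x = ((-1 : ℂ) ^ ((n : ℤ) - 1 - (k : ℤ)) / (2 * (Real.pi : ℂ) * I)) *
      ∫ s : ℝ,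
        I * Complex.exp ((t : ℂ) * ((μm : ℂ) + I * s) ^ 2 / 2 - (x : ℂ) * ((μm : ℂ) + I * s)) *
          ((∏ j ∈ Finset.Ioc k n, (((μm : ℂ) + I * s) - (μ j : ℂ)))
            / (((μm : ℂ) + I * s) - (μ n : ℂ))) := by
  unfold linePsi
  have hcast : (((n - 1 : ℕ) : ℤ) - (k : ℤ)) = (n : ℤ) - 1 - (k : ℤ) := by
    omega
  rw [hcast]
  congr 1
  refine integral_congr_ae (Filter.Eventually.of_forall fun s => ?_)
  dsimp only
  congr 1
  have hk : (∏ j ∈ Finset.Icc 1 k, (((μm : ℂ) + I * s) - (μ j : ℂ))) ≠ 0 :=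
    aux_prod_ne_zero hμm (hkn.trans hnN) s
  have hn : (((μm : ℂ) + I * s) - (μ n : ℂ)) ≠ 0 :=
    aux_factor_ne_zero hμm (Finset.mem_Icc.2 ⟨hn1, hnN⟩) s
  rw [div_eq_div_iff hk (by exact hn)]
  have h2 : (∏ j ∈ Finset.Icc 1 (n-1), (((μm : ℂ) + I * s) - (μ j : ℂ)))
      * (((μm : ℂ) + I * s) - (μ n : ℂ))
      = ∏ j ∈ Finset.Icc 1 n, (((μm : ℂ) + I * s) - (μ j : ℂ)) := by
    conv_rhs => rw [show n = (n - 1) + 1 from (Nat.succ_pred_eq_of_pos hn1).symm]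
    rw [Finset.prod_Icc_succ_top (Nat.le_add_left 1 (n-1))]
    rw [Nat.sub_add_cancel hn1]
  rw [h2, aux_prod_split hkn]
  ring

lemma aux_inner {μn : ℝ} {z : ℂ} (hz : z.re < μn) (t x : ℝ) (P : ℂ) :
    (∫ y in Set.Iic x, (Real.exp (μn * (y - x)) : ℂ) *
      (I * Complex.exp ((t : ℂ) * z ^ 2 / 2 - (y : ℂ) * z) * P))
    = I * Complex.exp ((t : ℂ) * z ^ 2 / 2 - (x : ℂ) * z) * P / ((μn : ℂ) - z) := by
  have ha : 0 < ((μn : ℂ) - z).re := by simp [hz]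
  have h1 : ∀ y : ℝ, (Real.exp (μn * (y - x)) : ℂ) *
      (I * Complex.exp ((t : ℂ) * z ^ 2 / 2 - (y : ℂ) * z) * P)
      = (I * Complex.exp ((t : ℂ) * z ^ 2 / 2) * P * Complex.exp (-(μn : ℂ) * x)) *
          Complex.exp (((μn : ℂ) - z) * y) := by
    intro y
    rw [Complex.ofReal_exp]
    calc (Complex.exp ((μn * (y - x) : ℝ) : ℂ)) *
        (I * Complex.exp ((t : ℂ) * z ^ 2 / 2 - (y : ℂ) * z) * P)
        = I * P * Complex.exp (((μn * (y - x) : ℝ) : ℂ) +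
            ((t : ℂ) * z ^ 2 / 2 - (y : ℂ) * z)) := by rw [Complex.exp_add]; ring
      _ = I * P * Complex.exp ((t : ℂ) * z ^ 2 / 2 + (-(μn : ℂ) * x) + ((μn : ℂ) - z) * y) := by
          congr 1; push_cast; ring
      _ = _ := by rw [Complex.exp_add, Complex.exp_add]; ring
  simp_rw [h1]
  rw [MeasureTheory.integral_const_mul, aux_integral_cexp_Iic ha x]
  rw [show (t : ℂ) * z ^ 2 / 2 - (x : ℂ) * z
      = (t : ℂ) * z ^ 2 / 2 + (-(μn : ℂ) * x) + ((μn : ℂ) - z) * x from by ring,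
    Complex.exp_add, Complex.exp_add]
  ring

end AuxLemmas

/-- `(φ_n ∗ Ψ_{n-k}^{n,t})(x) = Ψ_{n-1-k}^{n-1,t}(x)`. -/
theorem stmt0 (N : ℕ) (μ : ℕ → ℝ) (μm : ℝ) (hμm : ∀ j ∈ Finset.Icc 1 N, μm < μ j)
    (n k : ℕ) (hn1 : 1 ≤ n) (hnN : n ≤ N) (hk1 : 1 ≤ k) (hkn : k ≤ n)
    (t : ℝ) (ht : 0 < t) (x : ℝ) :
    (∫ y in Set.Iic x, (Real.exp (μ n * (y - x)) : ℂ) * linePsi μ μm n k t y)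
      = linePsi μ μm (n - 1) k t x := by
  have hnIcc : n ∈ Finset.Icc 1 N := Finset.mem_Icc.2 ⟨hn1, hnN⟩
  have hμn : μm < μ n := hμm n hnIcc
  set c : ℂ := ((-1 : ℂ) ^ ((n : ℤ) - (k : ℤ)) / (2 * (Real.pi : ℂ) * I)) with hc
  set G : ℝ → ℝ → ℂ := fun y s =>
    (Real.exp (μ n * (y - x)) : ℂ) *
      (I * Complex.exp ((t : ℂ) * ((μm : ℂ) + I * s) ^ 2 / 2 - (y : ℂ) * ((μm : ℂ) + I * s)) *
        ∏ j ∈ Finset.Ioc k n, (((μm : ℂ) + I * s) - (μ j : ℂ))) with hG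
  -- constants for the bound
  set m : ℕ := (Finset.Ioc k n).card with hm
  set C : ℝ := ∑ j ∈ Finset.Icc 1 n, |μm - μ j| with hCdef
  have hprod : ∀ s : ℝ,
      ‖∏ j ∈ Finset.Ioc k n, (((μm : ℂ) + I * s) - (μ j : ℂ))‖ ≤ (C + |s|) ^ m := by
    intro s
    rw [norm_prod]
    calc ∏ j ∈ Finset.Ioc k n, ‖(((μm : ℂ) + I * s) - (μ j : ℂ))‖
        ≤ ∏ _j ∈ Finset.Ioc k n, (C + |s|) := by
          refine Finset.prod_le_prod (fun _ _ => norm_nonneg _) (fun j hj => ?_)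
          have hmem : j ∈ Finset.Icc 1 n := by
            rw [Finset.mem_Ioc] at hj; exact Finset.mem_Icc.2 ⟨by omega, hj.2⟩
          have hCj : |μm - μ j| ≤ C :=
            Finset.single_le_sum (f := fun j => |μm - μ j|) (fun i _ => abs_nonneg _) hmem
          have he : (((μm : ℂ) + I * s) - (μ j : ℂ)) = ((μm - μ j : ℝ) : ℂ) + ((s : ℝ) : ℂ) * I := by
            push_cast; ring
          rw [he]
          refine (norm_add_le _ _).trans ?_
          simp only [Complex.norm_real, Real.norm_eq_abs, norm_mul, Complex.norm_I, mul_one]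
          linarith
      _ = (C + |s|) ^ m := by rw [Finset.prod_const, hm]
  -- integrability on the product space
  have hf2 : Integrable (fun s : ℝ =>
      Real.exp (-(μ n * x)) * (Real.exp (t * (μm ^ 2 - s ^ 2) / 2) * (C + |s|) ^ m)) volume := by
    apply Integrable.const_mul
    have h5 : (fun s : ℝ => Real.exp (t * (μm ^ 2 - s ^ 2) / 2) * (C + |s|) ^ m)
        = fun s => Real.exp (t * μm ^ 2 / 2) * ((C + |s|) ^ m * Real.exp (-(t / 2) * s ^ 2)) := by
      funext s
      rw [show t * (μm ^ 2 - s ^ 2) / 2 = t * μm ^ 2 / 2 + (-(t / 2) * s ^ 2) from by ring,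
        Real.exp_add]
      ring
    rw [h5]
    exact ((aux_poly_gauss (by linarith : (0:ℝ) < t / 2) C m).const_mul _)
  have hf1 : Integrable (fun y : ℝ => Real.exp ((μ n - μm) * y)) (volume.restrict (Set.Iic x)) :=
    aux_integrableOn_exp_mul_Iic (by linarith) x
  have hre : ∀ y s : ℝ,
      ((t : ℂ) * ((μm : ℂ) + I * s) ^ 2 / 2 - (y : ℂ) * ((μm : ℂ) + I * s)).re
        = t * (μm ^ 2 - s ^ 2) / 2 - y * μm := by
    intro y s
    have he : (t : ℂ) * ((μm : ℂ) + I * s) ^ 2 / 2 - (y : ℂ) * ((μm : ℂ) + I * s)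
        = ((t * (μm ^ 2 - s ^ 2) / 2 - y * μm : ℝ) : ℂ) + ((t * μm * s - y * s : ℝ) : ℂ) * I := by
      push_cast
      linear_combination ((t : ℂ) * (s : ℂ) ^ 2 / 2) * Complex.I_sq
    rw [he]
    simp only [Complex.add_re, Complex.ofReal_re, Complex.mul_re, Complex.I_re, Complex.I_im,
      Complex.ofReal_im]
    ring
  have hint : Integrable (Function.uncurry G) ((volume.restrict (Set.Iic x)).prod volume) := by
    refine (hf1.mul_prod hf2).mono' ?_ ?_
    · have hcont : Continuous fun p : ℝ × ℝ =>
          (Real.exp (μ n * (p.1 - x)) : ℂ) *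
            (I * Complex.exp ((t : ℂ) * ((μm : ℂ) + I * p.2) ^ 2 / 2 -
                (p.1 : ℂ) * ((μm : ℂ) + I * p.2)) *
              ∏ j ∈ Finset.Ioc k n, (((μm : ℂ) + I * p.2) - (μ j : ℂ))) := by
        fun_prop
      exact hcont.aestronglyMeasurable
    · filter_upwards with p
      obtain ⟨y, s⟩ := p
      have h1 : ‖Function.uncurry G (y, s)‖ = Real.exp (μ n * (y - x)) *
          (Real.exp (t * (μm ^ 2 - s ^ 2) / 2 - y * μm) *
            ‖∏ j ∈ Finset.Ioc k n, (((μm : ℂ) + I * s) - (μ j : ℂ))‖) := by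
        show ‖G y s‖ = _
        rw [hG]
        dsimp only
        rw [norm_mul, norm_mul, Complex.norm_real, Real.norm_eq_abs, norm_mul, Complex.norm_I,
          Complex.norm_exp, hre y s,
          abs_of_pos (Real.exp_pos _)]
        ring
      rw [h1]
      have hE : Real.exp (μ n * (y - x)) * Real.exp (t * (μm ^ 2 - s ^ 2) / 2 - y * μm)
          = Real.exp ((μ n - μm) * y) *
              (Real.exp (-(μ n * x)) * Real.exp (t * (μm ^ 2 - s ^ 2) / 2)) := by
        rw [← Real.exp_add, ← Real.exp_add, ← Real.exp_add]
        congr 1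
        ring
      calc Real.exp (μ n * (y - x)) *
            (Real.exp (t * (μm ^ 2 - s ^ 2) / 2 - y * μm) *
              ‖∏ j ∈ Finset.Ioc k n, (((μm : ℂ) + I * s) - (μ j : ℂ))‖)
          = (Real.exp (μ n * (y - x)) * Real.exp (t * (μm ^ 2 - s ^ 2) / 2 - y * μm)) *
              ‖∏ j ∈ Finset.Ioc k n, (((μm : ℂ) + I * s) - (μ j : ℂ))‖ := by ring
        _ ≤ (Real.exp (μ n * (y - x)) * Real.exp (t * (μm ^ 2 - s ^ 2) / 2 - y * μm)) *
              (C + |s|) ^ m := by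
            exact mul_le_mul_of_nonneg_left (hprod s) (by positivity)
        _ = Real.exp ((μ n - μm) * y) *
              (Real.exp (-(μ n * x)) * (Real.exp (t * (μm ^ 2 - s ^ 2) / 2) * (C + |s|) ^ m)) := by
            rw [hE]; ring
  -- Step 1
  have step1 : (∫ y in Set.Iic x, (Real.exp (μ n * (y - x)) : ℂ) * linePsi μ μm n k t y)
      = c * ∫ y in Set.Iic x, ∫ s : ℝ, G y s := by
    rw [← MeasureTheory.integral_const_mul]
    refine integral_congr_ae (Filter.Eventually.of_forall fun y => ?_)
    dsimp only
    rw [linePsi_eq hμm hkn hnN t y]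
    have h6 : (∫ s : ℝ, G y s) = (Real.exp (μ n * (y - x)) : ℂ) *
        ∫ s : ℝ, I * Complex.exp ((t : ℂ) * ((μm : ℂ) + I * s) ^ 2 / 2 -
            (y : ℂ) * ((μm : ℂ) + I * s)) *
          ∏ j ∈ Finset.Ioc k n, (((μm : ℂ) + I * s) - (μ j : ℂ)) := by
      rw [hG]
      exact MeasureTheory.integral_const_mul _ _
    rw [h6]
    ring
  have step2 : (∫ y in Set.Iic x, ∫ s : ℝ, G y s) = ∫ s : ℝ, ∫ y in Set.Iic x, G y s :=
    MeasureTheory.integral_integral_swap hint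
  have step3 : ∀ s : ℝ, (∫ y in Set.Iic x, G y s)
      = I * Complex.exp ((t : ℂ) * ((μm : ℂ) + I * s) ^ 2 / 2 - (x : ℂ) * ((μm : ℂ) + I * s)) *
          (∏ j ∈ Finset.Ioc k n, (((μm : ℂ) + I * s) - (μ j : ℂ)))
          / ((μ n : ℂ) - ((μm : ℂ) + I * s)) := by
    intro s
    have hz : ((μm : ℂ) + I * s).re < μ n := by simpa using hμn
    exact aux_inner hz t x _
  have step4 : (∫ s : ℝ, ∫ y in Set.Iic x, G y s)
      = - ∫ s : ℝ,
          I * Complex.exp ((t : ℂ) * ((μm : ℂ) + I * s) ^ 2 / 2 - (x : ℂ) * ((μm : ℂ) + I * s)) *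
            ((∏ j ∈ Finset.Ioc k n, (((μm : ℂ) + I * s) - (μ j : ℂ)))
              / (((μm : ℂ) + I * s) - (μ n : ℂ))) := by
    rw [← MeasureTheory.integral_neg]
    refine integral_congr_ae (Filter.Eventually.of_forall fun s => ?_)
    dsimp only
    rw [step3 s]
    rw [show (μ n : ℂ) - ((μm : ℂ) + I * s) = -((((μm : ℂ) + I * s)) - (μ n : ℂ)) from by ring,
      div_neg]
    ring
  rw [step1, step2, step4, linePsi_pred_eq hμm hn1 hkn hnN t x]
  have hsign : ((-1 : ℂ)) ^ ((n : ℤ) - 1 - (k : ℤ)) = -((-1 : ℂ) ^ ((n : ℤ) - (k : ℤ))) := by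
    rw [show (n : ℤ) - 1 - (k : ℤ) = ((n : ℤ) - (k : ℤ)) + (-1) from by ring,
      zpow_add₀ (by norm_num : (-1 : ℂ) ≠ 0), zpow_neg_one]
    norm_num
  rw [hsign, hc]
  ring
end

section
/- Let reals λ^{n-1} = (λ_1^{n-1} < ··· < λ_{n-1}^{n-1}) and λ^n = (λ_1^n < ··· < λ_n^n) be strictly ordered. Define the n×n matrix A with entries A_{ij} = φ_n(λ_i^{n-1}, λ_j^n) for i ≤ n-1 and A_{nj} = e^{μ_n λ_j^n} (virtual row), where φ_n(x,y) = e^{μ_n(y-x)}·1[x > y]. Then det A = (∏_{j=1}^{n} e^{μ_n λ_j^n})(∏_{j=1}^{n-1} e^{-μ_n λ_j^{n-1}}) · 1[λ^{n-1} ≼ λ^n], where λ^{n-1} ≼ λ^n means λ_k^n ≤ λ_k^{n-1} ≤ λ_{k+1}^n for all 1 ≤ k ≤ n-1. -/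
open Finset Classical


lemma downset_mem_iff (n : ℕ) (S : Finset (Fin n)) (hS : ∀ ⦃j j' : Fin n⦄, j' ≤ j → j ∈ S → j' ∈ S)
    (j : Fin n) : j ∈ S ↔ (j : ℕ) < S.card := by
  constructor
  · intro hj
    have h1 : Finset.Iic j ⊆ S := fun j' hj' => hS (Finset.mem_Iic.mp hj') hj
    have := Finset.card_le_card h1
    rw [Fin.card_Iic] at this
    omega
  · intro hj
    by_contra hns
    have h1 : S ⊆ Finset.Iio j := by
      intro j' hj'
      rw [Finset.mem_Iio]
      by_contra hle
      exact hns (hS (le_of_not_gt hle) hj')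
    have := Finset.card_le_card h1
    rw [Fin.card_Iio] at this
    omega

theorem indicator_det (n : ℕ) (c : Fin n → ℕ) (hmono : Monotone c) (hle : ∀ i, c i ≤ n) :
    Matrix.det (Matrix.of fun i j : Fin n => if (j : ℕ) < c i then (1 : ℝ) else 0)
      = if ∀ i : Fin n, c i = (i : ℕ) + 1 then 1 else 0 := by
  by_cases h : ∀ i : Fin n, c i = (i : ℕ) + 1
  · rw [if_pos h]
    rw [Matrix.det_of_lowerTriangular]
    · rw [Finset.prod_congr rfl (fun i _ => ?_), Finset.prod_const_one]
      simp only [Matrix.of_apply, h i]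
      rw [if_pos (by omega)]
    · intro i j hij
      simp only [Matrix.of_apply, h i]
      rw [if_neg]
      have : (i : ℕ) < (j : ℕ) := hij
      omega
  · rw [if_neg h]
    by_cases hinj : Function.Injective c
    · have hsm : StrictMono c := hmono.strictMono_of_injective hinj
      push_neg at h
      obtain ⟨i₀, hi₀⟩ := h
      have hn : 0 < n := i₀.pos
      by_cases h0 : c ⟨0, hn⟩ = 0
      · apply Matrix.det_eq_zero_of_row_eq_zero ⟨0, hn⟩
        intro j
        simp [h0]
      · exfalso
        have key : ∀ t (ht : t < n), t + 1 ≤ c ⟨t, ht⟩ := by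
          intro t
          induction t with
          | zero => intro ht; omega
          | succ s ih =>
            intro ht
            have hs : s < n := by omega
            have := hsm (show (⟨s, hs⟩ : Fin n) < ⟨s + 1, ht⟩ by simp)
            have := ih hs
            omega
        have hi₀2 : (i₀ : ℕ) + 2 ≤ c i₀ := by
          have heq : (⟨(i₀ : ℕ), i₀.isLt⟩ : Fin n) = i₀ := by ext; rfl
          have h1 := key (i₀ : ℕ) i₀.isLt
          rw [heq] at h1
          omega
        have key2 : ∀ s (hs : (i₀ : ℕ) + s < n), (i₀ : ℕ) + s + 2 ≤ c ⟨(i₀ : ℕ) + s, hs⟩ := by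
          intro s
          induction s with
          | zero =>
            intro hs
            have heq : (⟨(i₀ : ℕ) + 0, hs⟩ : Fin n) = i₀ := by ext; simp
            rw [heq]; omega
          | succ s ih =>
            intro hs
            have hs' : (i₀ : ℕ) + s < n := by omega
            have h2 := hsm (show (⟨(i₀ : ℕ) + s, hs'⟩ : Fin n) < ⟨(i₀ : ℕ) + s + 1, by omega⟩ by simp)
            have h3 := ih hs'
            have heq : (⟨(i₀ : ℕ) + (s + 1), hs⟩ : Fin n) = ⟨(i₀ : ℕ) + s + 1, by omega⟩ := by
              ext; simp; omega
            rw [heq]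
            omega
        have hlast : (i₀ : ℕ) + (n - 1 - (i₀ : ℕ)) < n := by omega
        have := key2 (n - 1 - (i₀ : ℕ)) hlast
        have := hle ⟨(i₀ : ℕ) + (n - 1 - (i₀ : ℕ)), hlast⟩
        omega
    · rw [Function.not_injective_iff] at hinj
      obtain ⟨i, i', hc, hne⟩ := hinj
      apply Matrix.det_zero_of_row_eq hne
      funext j
      simp [hc]

/-- determinant formula with a virtual row.  For strictly ordered
`λ^{n-1}` (length `m`) and `λ^n` (length `m+1`), with `A_{ij} = φ_n(λ_i^{n-1}, λ_j^n)`
for `i ≤ m` and `A_{(m+1)j} = e^{μ λ_j^n}`,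
`det A = (∏_j e^{μ λ_j^n})(∏_j e^{-μ λ_j^{n-1}}) · 1[λ^{n-1} ≺ λ^n]` (strict interlacing). -/
theorem stmt8 (m : ℕ) (μ : ℝ) (lam1 : Fin m → ℝ) (lam2 : Fin (m + 1) → ℝ)
    (h1 : StrictMono lam1) (h2 : StrictMono lam2)
    (hdist : ∀ i j, lam1 i ≠ lam2 j) :
    Matrix.det (Matrix.of fun i j : Fin (m + 1) =>
        if h : (i : ℕ) < m then
          (if lam2 j < lam1 ⟨i, h⟩ then Real.exp (μ * (lam2 j - lam1 ⟨i, h⟩)) else 0)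
        else Real.exp (μ * lam2 j))
      = (∏ j, Real.exp (μ * lam2 j)) * (∏ i, Real.exp (-μ * lam1 i)) *
          (if ∀ k : Fin m, lam2 k.castSucc < lam1 k ∧ lam1 k < lam2 k.succ then 1 else 0) := by
  set v : Fin (m + 1) → ℝ := fun i =>
    if h : (i : ℕ) < m then Real.exp (-μ * lam1 ⟨i, h⟩) else 1 with hv
  set B : Matrix (Fin (m + 1)) (Fin (m + 1)) ℝ := Matrix.of fun i j =>
    if h : (i : ℕ) < m then (if lam2 j < lam1 ⟨i, h⟩ then (1 : ℝ) else 0) else 1 with hB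
  have hA : (Matrix.of fun i j : Fin (m + 1) =>
        if h : (i : ℕ) < m then
          (if lam2 j < lam1 ⟨i, h⟩ then Real.exp (μ * (lam2 j - lam1 ⟨i, h⟩)) else 0)
        else Real.exp (μ * lam2 j))
      = Matrix.of fun i j => Real.exp (μ * lam2 j) *
          (Matrix.of fun i j => v i * B i j) i j := by
    ext i j
    simp only [Matrix.of_apply, hv, hB]
    by_cases h : (i : ℕ) < m
    · rw [dif_pos h, dif_pos h, dif_pos h]
      by_cases hlt : lam2 j < lam1 ⟨i, h⟩
      · rw [if_pos hlt, if_pos hlt, mul_one, ← Real.exp_add]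
        ring_nf
      · rw [if_neg hlt, if_neg hlt]; ring
    · rw [dif_neg h, dif_neg h, dif_neg h]; ring
  rw [hA, Matrix.det_mul_row, Matrix.det_mul_column]
  have hvprod : (∏ i, v i) = ∏ i, Real.exp (-μ * lam1 i) := by
    rw [Fin.prod_univ_castSucc]
    have hlastv : v (Fin.last m) = 1 := by
      simp [hv, Fin.last]
    rw [hlastv, mul_one]
    apply Finset.prod_congr rfl
    intro i _
    have hc : ((Fin.castSucc i : Fin (m + 1)) : ℕ) < m := i.isLt
    simp only [hv, dif_pos hc]
    congr 1
  rw [hvprod]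
  -- now compute det B
  set c : Fin (m + 1) → ℕ := fun i =>
    if h : (i : ℕ) < m then (Finset.univ.filter (fun j => lam2 j < lam1 ⟨i, h⟩)).card
    else m + 1 with hc
  have hcm : ∀ (i : Fin (m + 1)) (h : (i : ℕ) < m),
      c i = (Finset.univ.filter (fun j => lam2 j < lam1 ⟨i, h⟩)).card := by
    intro i h; simp only [hc, dif_pos h]
  have hclast : ∀ (i : Fin (m + 1)), ¬ (i : ℕ) < m → c i = m + 1 := by
    intro i h; simp only [hc, dif_neg h]
  have hdown : ∀ (t : ℝ) (j j' : Fin (m + 1)), j' ≤ j →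
      j ∈ Finset.univ.filter (fun j => lam2 j < t) →
      j' ∈ Finset.univ.filter (fun j => lam2 j < t) := by
    intro t j j' hle hj
    rw [Finset.mem_filter] at hj ⊢
    exact ⟨Finset.mem_univ _, lt_of_le_of_lt (h2.monotone hle) hj.2⟩
  have hiff : ∀ (i : Fin (m + 1)) (h : (i : ℕ) < m) (j : Fin (m + 1)),
      lam2 j < lam1 ⟨i, h⟩ ↔ (j : ℕ) < c i := by
    intro i h j
    rw [hcm i h]
    rw [← downset_mem_iff (m + 1) _ (fun j j' hle hj => hdown _ j j' hle hj)]
    simp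
  have hBeq : B = Matrix.of fun i j : Fin (m + 1) => if (j : ℕ) < c i then (1 : ℝ) else 0 := by
    ext i j
    simp only [hB, Matrix.of_apply]
    by_cases h : (i : ℕ) < m
    · rw [dif_pos h]
      rw [if_congr (hiff i h j) rfl rfl]
    · rw [dif_neg h]
      rw [if_pos]
      rw [hclast i h]; omega
  have hcle : ∀ i, c i ≤ m + 1 := by
    intro i
    by_cases h : (i : ℕ) < m
    · rw [hcm i h]
      calc _ ≤ Finset.univ.card := Finset.card_filter_le _ _
        _ = m + 1 := by simp
    · rw [hclast i h]
  have hcmono : Monotone c := by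
    intro i i' hle
    by_cases h' : (i' : ℕ) < m
    · have h : (i : ℕ) < m := lt_of_le_of_lt hle h'
      rw [hcm i h, hcm i' h']
      apply Finset.card_le_card
      intro j hj
      rw [Finset.mem_filter] at hj ⊢
      refine ⟨hj.1, lt_of_lt_of_le hj.2 ?_⟩
      exact h1.monotone (by exact_mod_cast hle)
    · have := hcle i
      rw [hclast i' h']
      omega
  rw [hBeq, indicator_det (m + 1) c hcmono hcle, ← mul_assoc]
  congr 1
  apply if_congr _ rfl rfl
  constructor
  · intro hall k
    have hk : ((Fin.castSucc k : Fin (m + 1)) : ℕ) < m := k.isLt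
    have heqk : (⟨((Fin.castSucc k : Fin (m + 1)) : ℕ), hk⟩ : Fin m) = k := by ext; simp
    constructor
    · have := (hiff (Fin.castSucc k) hk (Fin.castSucc k)).mpr
      rw [heqk] at this
      apply this
      rw [hall (Fin.castSucc k)]
      simp
    · have hcontra := (hiff (Fin.castSucc k) hk (Fin.succ k)).mp
      rw [heqk] at hcontra
      by_contra hlt
      push_neg at hlt
      have hne := hdist k (Fin.succ k)
      have : lam2 (Fin.succ k) < lam1 k := lt_of_le_of_ne hlt (Ne.symm hne)
      have := hcontra this
      rw [hall (Fin.castSucc k)] at this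
      simp at this
  · intro hP i
    by_cases h : (i : ℕ) < m
    · have hset : Finset.univ.filter (fun j => lam2 j < lam1 ⟨i, h⟩)
          = Finset.Iic (Fin.castSucc (⟨(i : ℕ), h⟩ : Fin m)) := by
        ext j
        rw [Finset.mem_filter, Finset.mem_Iic]
        constructor
        · intro hj
          by_contra hgt
          push_neg at hgt
          have : Fin.succ (⟨(i : ℕ), h⟩ : Fin m) ≤ j := hgt
          have h3 : lam2 (Fin.succ ⟨(i : ℕ), h⟩) ≤ lam2 j := h2.monotone this
          have h4 := (hP ⟨(i : ℕ), h⟩).2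
          linarith [hj.2]
        · intro hj
          refine ⟨Finset.mem_univ _, ?_⟩
          have h3 : lam2 j ≤ lam2 (Fin.castSucc ⟨(i : ℕ), h⟩) := h2.monotone hj
          have h4 := (hP ⟨(i : ℕ), h⟩).1
          linarith
      rw [hcm i h, hset, Fin.card_Iic]
      simp
    · rw [hclast i h]
      omega
end

section
/- Let b : [0,∞) → ℝ be continuous with b(0) = 0, f : [0,∞) → ℝ continuous, y ∈ ℝ with f(0) < y. Then for all t ≥ 0, y + b(t) − min{ 0, inf_{0 ≤ s ≤ t} ( y + b(s) − f(s) ) } = max{ y + b(t), sup_{0 ≤ s ≤ t} ( f(s) + b(t) − b(s) ) }. -/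
/-- the two forms of the Skorokhod reflection map coincide:
for continuous `b` (with `b 0 = 0`), continuous barrier `f` with `f 0 < y`, and `t ≥ 0`,
`y + b(t) − min{0, inf_{0≤s≤t}(y + b(s) − f(s))}
  = max{y + b(t), sup_{0≤s≤t}(f(s) + b(t) − b(s))}`. -/
theorem stmt16 (b f : ℝ → ℝ) (hb : ContinuousOn b (Set.Ici 0)) (hb0 : b 0 = 0)
    (hf : ContinuousOn f (Set.Ici 0)) (y : ℝ) (hy : f 0 < y) (t : ℝ) (ht : 0 ≤ t) :
    y + b t - min 0 (sInf ((fun s => y + b s - f s) '' Set.Icc 0 t))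
      = max (y + b t) (sSup ((fun s => f s + b t - b s) '' Set.Icc 0 t)) := by
  have hsub : Set.Icc (0:ℝ) t ⊆ Set.Ici 0 := fun x hx => hx.1
  have hg : ContinuousOn (fun s => f s - b s) (Set.Icc 0 t) :=
    (hf.mono hsub).sub (hb.mono hsub)
  set A : Set ℝ := (fun s => f s - b s) '' Set.Icc 0 t with hA
  have hAc : IsCompact A := (isCompact_Icc).image_of_continuousOn hg
  have hAne : A.Nonempty := (Set.nonempty_Icc.2 ht).image _
  have hAa : BddAbove A := hAc.bddAbove
  have hAb : BddBelow A := hAc.bddBelow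
  set S : ℝ := sSup A with hS
  -- inf rewrite
  have h1 : ((fun s => y + b s - f s) '' Set.Icc 0 t) = (fun x => y - x) '' A := by
    rw [hA, Set.image_image]
    exact Set.image_congr fun s _ => by ring
  have h2 : sInf ((fun x => y - x) '' A) = y - S := by
    have : Antitone (fun x : ℝ => y - x) := fun u v huv => by dsimp; linarith
    exact (this.map_csSup_of_continuousAt (by fun_prop) hAne hAa).symm
  -- sup rewrite
  have h3 : ((fun s => f s + b t - b s) '' Set.Icc 0 t) = (fun x => b t + x) '' A := by
    rw [hA, Set.image_image]
    exact Set.image_congr fun s _ => by ring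
  have h4 : sSup ((fun x => b t + x) '' A) = b t + S := by
    have : Monotone (fun x : ℝ => b t + x) := fun u v huv => by dsimp; linarith
    exact (this.map_csSup_of_continuousAt (by fun_prop) hAne hAa).symm
  rw [h1, h2, h3, h4]
  rcases le_total y S with h | h
  · rw [min_eq_right (by linarith), max_eq_right (by linarith)]; ring
  · rw [min_eq_left (by linarith), max_eq_left (by linarith)]; ring
end
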